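/- Let N ≥ 1 and let P, Q : ℝ → ℝ be continuous functions such that Q(s) ≠ 0 for all sufficiently large |s| and P(s)/Q(s) → 0 as |s| → +∞. Suppose {vₙ} is a sequence of measurable functions from ℝᴺ to ℝ and v : ℝᴺ → ℝ is measurable, such that supₙ ∫_{ℝᴺ} |Q(vₙ(x))| dx < +∞ and P(vₙ(x)) → v(x) almost everywhere in ℝᴺ. Then for every bounded Borel set B ⊂ ℝᴺ, ∫_B |P(vₙ(x)) − v(x)| dx → 0 as n → +∞. -/

import Mathlib

open MeasureTheory Filter
open scoped ENNReal

/-- Strauss compactness lemma, first part (Lemma 3.6): if `P(s)/Q(s) → 0` as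
`|s| → ∞`, `∫|Q(vₙ)|` is uniformly bounded and `P(vₙ(x)) → v(x)` a.e., then
`P(vₙ) → v` in `L¹(B)` for every bounded Borel set `B`. -/
theorem strauss_compactness_local
    (N : ℕ) (hN : 1 ≤ N) (P Q : ℝ → ℝ)
    (hP : Continuous P) (hQ : Continuous Q)
    (hQne : ∃ M : ℝ, ∀ s : ℝ, M ≤ |s| → Q s ≠ 0)
    (hlim : Tendsto (fun s => P s / Q s) (cocompact ℝ) (nhds 0))
    (v : ℕ → EuclideanSpace ℝ (Fin N) → ℝ) (w : EuclideanSpace ℝ (Fin N) → ℝ)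
    (hv : ∀ n, Measurable (v n)) (hw : Measurable w)
    (hbound : ∃ C : ℝ≥0∞, C < ⊤ ∧
      ∀ n, (∫⁻ x : EuclideanSpace ℝ (Fin N), ENNReal.ofReal |Q (v n x)|) ≤ C)
    (hae : ∀ᵐ x : EuclideanSpace ℝ (Fin N),
      Tendsto (fun n => P (v n x)) atTop (nhds (w x))) :
    ∀ B : Set (EuclideanSpace ℝ (Fin N)), MeasurableSet B → Bornology.IsBounded B →
      Tendsto (fun n => ∫⁻ x in B, ENNReal.ofReal |P (v n x) - w x|)
        atTop (nhds 0) := by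
  classical
  obtain ⟨M, hM⟩ := hQne
  obtain ⟨C, hCtop, hCb⟩ := hbound
  -- pointwise bound: for every ε > 0 there is K with |P(vₙ x)| ≤ ε |Q(vₙ x)| + K
  have key : ∀ ε : ℝ, 0 < ε → ∃ K : ℝ, 0 ≤ K ∧
      ∀ (n : ℕ) (x : EuclideanSpace ℝ (Fin N)),
        |P (v n x)| ≤ ε * |Q (v n x)| + K := by
    intro ε hε
    have h1 : ∀ᶠ s in cocompact ℝ, dist (P s / Q s) 0 < ε :=
      Metric.tendsto_nhds.mp hlim ε hε
    obtain ⟨Kc, hKc, hKs⟩ := mem_cocompact.mp h1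
    obtain ⟨R, hR⟩ := hKc.isBounded.subset_closedBall 0
    set R' : ℝ := max (max R M) 0 + 1 with hR'def
    have hR'pos : 0 < R' := by positivity
    have hbig : ∀ s : ℝ, R' ≤ |s| → |P s| ≤ ε * |Q s| := by
      intro s hs
      have hR'eq : R' = max (max R M) 0 + 1 := hR'def
      have hMle : M ≤ max (max R M) 0 := le_trans (le_max_right R M) (le_max_left _ _)
      have hRle : R ≤ max (max R M) 0 := le_trans (le_max_left R M) (le_max_left _ _)
      have hQs : Q s ≠ 0 := hM s (by linarith)
      have hsK : s ∉ Kc := by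
        intro h
        have h2 := hR h
        simp only [Metric.mem_closedBall, Real.dist_eq, sub_zero] at h2
        linarith
      have h3 : |P s / Q s| < ε := by
        have h3' := hKs hsK
        rwa [Set.mem_setOf_eq, Real.dist_eq, sub_zero] at h3'
      have h4 : |P s| / |Q s| ≤ ε := by rw [← abs_div]; exact h3.le
      have h5 : 0 < |Q s| := abs_pos.mpr hQs
      calc |P s| = |P s| / |Q s| * |Q s| := by field_simp
        _ ≤ ε * |Q s| := mul_le_mul_of_nonneg_right h4 (abs_nonneg _)
    obtain ⟨K0, hK0⟩ := (isCompact_Icc (a := -R') (b := R')).exists_bound_of_continuousOn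
      hP.continuousOn
    refine ⟨max K0 0, le_max_right _ _, fun n x => ?_⟩
    rcases le_or_gt R' |v n x| with h | h
    · have := hbig (v n x) h
      have hnn : (0:ℝ) ≤ max K0 0 := le_max_right _ _
      linarith
    · have hmem : v n x ∈ Set.Icc (-R') R' := by
        rw [Set.mem_Icc]
        constructor <;> [linarith [neg_abs_le (v n x)]; linarith [le_abs_self (v n x)]]
      have h6 : |P (v n x)| ≤ K0 := by simpa [Real.norm_eq_abs] using hK0 _ hmem
      have h7 : 0 ≤ ε * |Q (v n x)| := by positivity
      have : K0 ≤ max K0 0 := le_max_left _ _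
      linarith
  -- measurability facts
  have hPm : ∀ n, Measurable fun x : EuclideanSpace ℝ (Fin N) => P (v n x) :=
    fun n => hP.measurable.comp (hv n)
  have hQm : ∀ n, Measurable fun x : EuclideanSpace ℝ (Fin N) =>
      ENNReal.ofReal |Q (v n x)| :=
    fun n => ((hQ.measurable.comp (hv n)).abs).ennreal_ofReal
  -- integral bound on arbitrary measurable sets
  have keyint : ∀ ε : ℝ, 0 < ε → ∃ K : ℝ, 0 ≤ K ∧
      ∀ (n : ℕ) (s : Set (EuclideanSpace ℝ (Fin N))),
        (∫⁻ x in s, ENNReal.ofReal |P (v n x)|) ≤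
          ENNReal.ofReal ε * C + ENNReal.ofReal K * volume s := by
    intro ε hε
    obtain ⟨K, hK0, hK⟩ := key ε hε
    refine ⟨K, hK0, fun n s => ?_⟩
    have step1 : (∫⁻ x in s, ENNReal.ofReal |P (v n x)|) ≤
        ∫⁻ x in s, (ENNReal.ofReal ε * ENNReal.ofReal |Q (v n x)| + ENNReal.ofReal K) := by
      apply lintegral_mono
      intro x
      calc ENNReal.ofReal |P (v n x)| ≤ ENNReal.ofReal (ε * |Q (v n x)| + K) :=
            ENNReal.ofReal_le_ofReal (hK n x)
        _ = ENNReal.ofReal (ε * |Q (v n x)|) + ENNReal.ofReal K :=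
            ENNReal.ofReal_add (by positivity) hK0
        _ = ENNReal.ofReal ε * ENNReal.ofReal |Q (v n x)| + ENNReal.ofReal K := by
            rw [ENNReal.ofReal_mul hε.le]
    have step2 : (∫⁻ x in s, (ENNReal.ofReal ε * ENNReal.ofReal |Q (v n x)| + ENNReal.ofReal K)) =
        ENNReal.ofReal ε * (∫⁻ x in s, ENNReal.ofReal |Q (v n x)|) +
          ENNReal.ofReal K * volume s := by
      rw [lintegral_add_right _ measurable_const, setLIntegral_const,
        lintegral_const_mul _ (hQm n)]
    refine step1.trans (step2.le.trans ?_)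
    gcongr
    exact (setLIntegral_le_lintegral s _).trans (hCb n)
  -- main argument
  intro B hB hBb
  have hBfin : volume B < ⊤ := hBb.measure_lt_top
  set μ := (volume : Measure (EuclideanSpace ℝ (Fin N))).restrict B with hμ
  haveI : IsFiniteMeasure μ := ⟨by rwa [hμ, Measure.restrict_apply_univ]⟩
  have hfmeas : ∀ n, AEStronglyMeasurable (fun x => P (v n x)) μ :=
    fun n => (hPm n).aestronglyMeasurable
  have hnn : ∀ (f : EuclideanSpace ℝ (Fin N) → ℝ) (x),
      (‖f x‖₊ : ℝ≥0∞) = ENNReal.ofReal |f x| := by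
    intro f x
    rw [← Real.norm_eq_abs, ofReal_norm, enorm_eq_nnnorm]
  -- uniform integrability
  have hui : UnifIntegrable (fun n x => P (v n x)) 1 μ := by
    intro ε hε
    have hCt : C ≠ ⊤ := hCtop.ne
    set ε₁ : ℝ := (ε / 2) / (C.toReal + 1) with hε₁def
    have hCtnn : 0 ≤ C.toReal := ENNReal.toReal_nonneg
    have hε₁ : 0 < ε₁ := by positivity
    obtain ⟨K, hK0, hK⟩ := keyint ε₁ hε₁
    refine ⟨(ε / 2) / (K + 1), by positivity, fun n s hs hμs => ?_⟩
    have e1 : eLpNorm (s.indicator fun x => P (v n x)) 1 μ =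
        ∫⁻ x in s, ENNReal.ofReal |P (v n x)| ∂μ := by
      rw [eLpNorm_one_eq_lintegral_enorm, ← lintegral_indicator hs]
      congr 1
      funext x
      by_cases hx : x ∈ s
      · rw [Set.indicator_of_mem hx, Set.indicator_of_mem hx]
        exact hnn (fun y => P (v n y)) x
      · rw [Set.indicator_of_notMem hx, Set.indicator_of_notMem hx]
        simp
    rw [e1, hμ, Measure.restrict_restrict hs]
    have e2 := hK n (s ∩ B)
    refine e2.trans ?_
    have hvol : volume (s ∩ B) ≤ ENNReal.ofReal ((ε / 2) / (K + 1)) := by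
      rw [hμ, Measure.restrict_apply hs] at hμs
      exact hμs
    have b1 : ENNReal.ofReal ε₁ * C ≤ ENNReal.ofReal (ε / 2) := by
      calc ENNReal.ofReal ε₁ * C ≤ ENNReal.ofReal ε₁ * ENNReal.ofReal (C.toReal + 1) := by
            gcongr
            calc C = ENNReal.ofReal C.toReal := by rw [ENNReal.ofReal_toReal hCt]
              _ ≤ ENNReal.ofReal (C.toReal + 1) := by gcongr; linarith
        _ = ENNReal.ofReal (ε₁ * (C.toReal + 1)) := (ENNReal.ofReal_mul hε₁.le).symm
        _ = ENNReal.ofReal (ε / 2) := by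
            congr 1
            rw [hε₁def]
            field_simp
    have b2 : ENNReal.ofReal K * volume (s ∩ B) ≤ ENNReal.ofReal (ε / 2) := by
      calc ENNReal.ofReal K * volume (s ∩ B) ≤
          ENNReal.ofReal K * ENNReal.ofReal ((ε / 2) / (K + 1)) := by gcongr
        _ = ENNReal.ofReal (K * ((ε / 2) / (K + 1))) := (ENNReal.ofReal_mul hK0).symm
        _ ≤ ENNReal.ofReal (ε / 2) := by
            apply ENNReal.ofReal_le_ofReal
            rw [mul_div_assoc'] -- K * (ε/2) / (K+1)
            rw [div_le_iff₀ (by positivity)]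
            nlinarith
    calc ENNReal.ofReal ε₁ * C + ENNReal.ofReal K * volume (s ∩ B) ≤
        ENNReal.ofReal (ε / 2) + ENNReal.ofReal (ε / 2) := add_le_add b1 b2
      _ = ENNReal.ofReal ε := by
          rw [← ENNReal.ofReal_add (by positivity) (by positivity)]
          norm_num
  -- the limit is in L¹
  obtain ⟨K₁, hK₁0, hK₁⟩ := keyint 1 one_pos
  have hD : ENNReal.ofReal 1 * C + ENNReal.ofReal K₁ * volume B < ⊤ := by
    apply ENNReal.add_lt_top.mpr
    exact ⟨ENNReal.mul_lt_top ENNReal.ofReal_lt_top hCtop,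
      ENNReal.mul_lt_top ENNReal.ofReal_lt_top hBfin⟩
  have haeμ : ∀ᵐ x ∂μ, Tendsto (fun n => P (v n x)) atTop (nhds (w x)) :=
    ae_restrict_of_ae hae
  have hwL1 : MemLp w 1 μ := by
    refine ⟨hw.aestronglyMeasurable, ?_⟩
    rw [eLpNorm_one_eq_lintegral_enorm]
    have hcong : ∀ᵐ x ∂μ, (‖w x‖₊ : ℝ≥0∞) =
        Filter.liminf (fun n => ENNReal.ofReal |P (v n x)|) atTop := by
      filter_upwards [haeμ] with x hx
      have : Tendsto (fun n => ENNReal.ofReal |P (v n x)|) atTop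
          (nhds (ENNReal.ofReal |w x|)) := by
        exact (ENNReal.continuous_ofReal.tendsto _).comp ((continuous_abs.tendsto _).comp hx)
      rw [hnn, this.liminf_eq]
    calc (∫⁻ x, (‖w x‖₊ : ℝ≥0∞) ∂μ) =
        ∫⁻ x, Filter.liminf (fun n => ENNReal.ofReal |P (v n x)|) atTop ∂μ :=
          lintegral_congr_ae hcong
      _ ≤ Filter.liminf (fun n => ∫⁻ x, ENNReal.ofReal |P (v n x)| ∂μ) atTop :=
          lintegral_liminf_le fun n => ((hPm n).abs).ennreal_ofReal
      _ ≤ ENNReal.ofReal 1 * C + ENNReal.ofReal K₁ * volume B := by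
          apply Filter.liminf_le_of_le
          · isBoundedDefault
          · intro b hb
            obtain ⟨n, hn⟩ := hb.exists
            exact hn.trans (hK₁ n B)
      _ < ⊤ := hD
  -- convergence in measure and conclusion
  have htim : TendstoInMeasure μ (fun n x => P (v n x)) atTop w :=
    tendstoInMeasure_of_tendsto_ae hfmeas haeμ
  have hmain := tendsto_Lp_finite_of_tendstoInMeasure (μ := μ) le_rfl ENNReal.one_ne_top
    hfmeas hwL1 hui htim
  refine hmain.congr fun n => ?_
  rw [eLpNorm_one_eq_lintegral_enorm]
  apply lintegral_congr
  intro x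
  simp only [Pi.sub_apply]
  exact hnn (fun y => P (v n y) - w y) x
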